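/- arXiv:2003.12014 — 2 statements merged into one kernel-verified Lean document; each statement's English description precedes it below -/
import Mathlib

section
/- If (X,𝓔) and (X,𝓔') are finitary coarse spaces on the same set X with the same parallelity relation on ultrafilters (∥_{(X,𝓔)} = ∥_{(X,𝓔')}), then 𝓔 = 𝓔'. -/
open Set

/-- A coarse structure on a set `X`. -/
structure CoarseStructure (X : Type*) where
  sets : Set (Set (X × X))
  diagonal_mem : ∀ E ∈ sets, ∀ x : X, (x, x) ∈ E
  comp_mem : ∀ E ∈ sets, ∀ E' ∈ sets,
    {q : X × X | ∃ z : X, (q.1, z) ∈ E ∧ (z, q.2) ∈ E'} ∈ sets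
  inv_mem : ∀ E ∈ sets, {q : X × X | (q.2, q.1) ∈ E} ∈ sets
  subset_mem : ∀ E ∈ sets, ∀ E', E' ⊆ E → (∀ x : X, (x, x) ∈ E') → E' ∈ sets
  covers : ⋃₀ sets = Set.univ

/-- The ball `E[A]`. -/
def ball {X : Type*} (E : Set (X × X)) (A : Set X) : Set X := {y | ∃ a ∈ A, (a, y) ∈ E}

/-- A bounded subset of a coarse space. -/
def CoarseStructure.Bounded {X : Type*} (C : CoarseStructure X) (B : Set X) : Prop :=
  ∃ E ∈ C.sets, ∃ x : X, B ⊆ ball E {x}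

/-- A finitary coarse space: uniformly finite balls. -/
def CoarseStructure.Finitary {X : Type*} (C : CoarseStructure X) : Prop :=
  ∀ E ∈ C.sets, ∃ n : ℕ, ∀ x : X, (ball E {x}).Finite ∧ (ball E {x}).ncard < n

/-- The set `X^♯` of ultrafilters all of whose members are unbounded. -/
def CoarseStructure.Sharp {X : Type*} (C : CoarseStructure X) : Set (Ultrafilter X) :=
  {p | ∀ P ∈ p, ¬ C.Bounded P}

/-- The parallelity relation on ultrafilters. -/
def CoarseStructure.Parallel {X : Type*} (C : CoarseStructure X) (p q : Ultrafilter X) : Prop :=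
  ∃ E ∈ C.sets, ∀ P ∈ p, ball E P ∈ q

/-- The entourage determined by a set of permutations. -/
def entourage {X : Type*} (F : Set (Equiv.Perm X)) : Set (X × X) :=
  {q | ∃ g ∈ F, q.2 = g q.1}

/-- The finitary coarse structure `X_G` determined by a group `G` of permutations of `X`:
its entourages are the diagonal-containing subsets of `{(x,gx) : x ∈ X, g ∈ F}`
for finite `F ⊆ G` with `id ∈ F`. -/
def XGsets {X : Type*} (G : Subgroup (Equiv.Perm X)) : Set (Set (X × X)) :=
  {E | (∀ x : X, (x, x) ∈ E) ∧ ∃ F : Finset (Equiv.Perm X),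
    (1 : Equiv.Perm X) ∈ F ∧ ↑F ⊆ (G : Set (Equiv.Perm X)) ∧ E ⊆ entourage ↑F}

/-- A free ultrafilter. -/
def IsFree {X : Type*} (p : Ultrafilter X) : Prop := (p : Filter X) ≤ Filter.cofinite

/-- `X*`, the space of free ultrafilters with the Stone topology. -/
def FreeUF (X : Type*) : Type _ := {p : Ultrafilter X // IsFree p}

instance (X : Type*) : TopologicalSpace (FreeUF X) :=
  instTopologicalSpaceSubtype

/-- The orbit `Gp` of an ultrafilter under the induced action `gp = {gP : P ∈ p}`. -/
def ufOrbit {X : Type*} (G : Subgroup (Equiv.Perm X)) (p : Ultrafilter X) :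
    Set (Ultrafilter X) :=
  {q | ∃ g ∈ G, q = Ultrafilter.map (⇑g) p}

/-- The `p`-companion `Δ_p(A) = A* ∩ Gp`. -/
def compan {X : Type*} (G : Subgroup (Equiv.Perm X)) (p : Ultrafilter X) (A : Set X) :
    Set (Ultrafilter X) :=
  {q | A ∈ q ∧ q ∈ ufOrbit G p}

/-- Large subsets of `X_G`. -/
def IsLarge {X : Type*} (G : Subgroup (Equiv.Perm X)) (A : Set X) : Prop :=
  ∃ E ∈ XGsets G, ball E A = Set.univ

/-- Thick subsets of `X_G`. -/
def IsThick {X : Type*} (G : Subgroup (Equiv.Perm X)) (A : Set X) : Prop :=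
  ∀ E ∈ XGsets G, ∃ a ∈ A, ball E {a} ⊆ A

/-- Thin (discrete) subsets of `X_G`. -/
def IsThin {X : Type*} (G : Subgroup (Equiv.Perm X)) (A : Set X) : Prop :=
  ∀ E ∈ XGsets G, ∃ B : Set X, B.Finite ∧ ∀ a ∈ A \ B, ball E {a} ∩ A = {a}

/-- Sparse subsets of `X_G`. -/
def IsSparse {X : Type*} (G : Subgroup (Equiv.Perm X)) (A : Set X) : Prop :=
  ∀ p : Ultrafilter X, IsFree p → (compan G p A).Finite

/-- Scattered subsets of `X_G`. -/
def IsScattered {X : Type*} (G : Subgroup (Equiv.Perm X)) (A : Set X) : Prop :=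
  ∀ Y ⊆ A, Y.Infinite →
    ∃ p : Ultrafilter X, IsFree p ∧ Y ∈ p ∧ (compan G p Y).Finite

/-- Close subsets of a coarse space. -/
def CoarseStructure.Close {X : Type*} (C : CoarseStructure X) (A B : Set X) : Prop :=
  ∃ E ∈ C.sets, A ⊆ ball E B ∧ B ⊆ ball E A

/-- Close subsets of `X_G`. -/
def CloseG {X : Type*} (G : Subgroup (Equiv.Perm X)) (A B : Set X) : Prop :=
  ∃ E ∈ XGsets G, A ⊆ ball E B ∧ B ⊆ ball E A

/-- Linked subsets of `X_G`. -/
def LinkedG {X : Type*} (G : Subgroup (Equiv.Perm X)) (A B : Set X) : Prop :=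
  (A.Finite ∧ B.Finite) ∨
    ∃ A' ⊆ A, ∃ B' ⊆ B, A'.Infinite ∧ B'.Infinite ∧ CloseG G A' B'


open Set

/-- The `n`-th block `{g_0^{ε_0} ⋯ g_n^{ε_n} x_n : ε_i ∈ {0,1}}`. -/
def pwBlock {X : Type*} (g : ℕ → Equiv.Perm X) (x : ℕ → X) (n : ℕ) : Set X :=
  {y | ∃ ε : Fin (n + 1) → Bool,
    y = ((List.ofFn fun i : Fin (n + 1) =>
      (g i) ^ (if ε i then 1 else 0)).prod : Equiv.Perm X) (x n)}

/-- A piece-wise shifted FP-set determined by the group `G`. -/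
def IsPWShiftedFP {X : Type*} (G : Subgroup (Equiv.Perm X)) (Y : Set X) : Prop :=
  ∃ g : ℕ → Equiv.Perm X, ∃ x : ℕ → X,
    (∀ n, g n ∈ G) ∧
    (∀ m n, m ≠ n → Disjoint (pwBlock g x m) (pwBlock g x n)) ∧
    (∀ n, (pwBlock g x n).ncard = 2 ^ (n + 1)) ∧
    Y = ⋃ n, pwBlock g x n

/-- The group of all self-homeomorphisms of a topological space, as a subgroup
of the permutation group. -/
def homeoSubgroup (X : Type*) [TopologicalSpace X] : Subgroup (Equiv.Perm X) where
  carrier := {g | Continuous g ∧ Continuous g.symm}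
  one_mem' := ⟨continuous_id, continuous_id⟩
  mul_mem' := by
    rintro a b ⟨ha1, ha2⟩ ⟨hb1, hb2⟩
    refine ⟨?_, ?_⟩
    · simpa [Equiv.Perm.mul_def, Equiv.coe_trans] using ha1.comp hb1
    · simpa [Equiv.Perm.mul_def, Equiv.symm_trans_apply] using (hb2.comp ha2 : _)
  inv_mem' := by
    rintro a ⟨ha1, ha2⟩
    exact ⟨ha2, by simpa [Equiv.Perm.inv_def] using ha1⟩


/-- The parallelity relation on ultrafilters over the coarse space `X_G`. -/
def ParallelG {X : Type*} (G : Subgroup (Equiv.Perm X)) (p q : Ultrafilter X) : Prop :=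
  ∃ E ∈ XGsets G, ∀ P ∈ p, ball E P ∈ q

/-- Linked subsets of a coarse space. -/
def CoarseStructure.Linked {X : Type*} (C : CoarseStructure X) (A B : Set X) : Prop :=
  (C.Bounded A ∧ C.Bounded B) ∨
    ∃ A' ⊆ A, ∃ B' ⊆ B, ¬ C.Bounded A' ∧ ¬ C.Bounded B' ∧ C.Close A' B'

/-- The orbit `Gp` viewed as a subset of the space `X*` of free ultrafilters. -/
def freeOrbit {X : Type*} (G : Subgroup (Equiv.Perm X)) (p : Ultrafilter X) :
    Set (FreeUF X) :=
  {q | q.1 ∈ ufOrbit G p}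


section ParallelHelpers

open Filter



section Helpers

variable {α : Type*}

lemma rank_injOn [LinearOrder α] {s : Set α} (hs : s.Finite) :
    Set.InjOn (fun y => {z ∈ s | z < y}.ncard) s := by
  have key : ∀ y1 ∈ s, ∀ y2 ∈ s, y1 < y2 →
      {z ∈ s | z < y1}.ncard < {z ∈ s | z < y2}.ncard := by
    intro y1 h1 y2 h2 hlt
    apply Set.ncard_lt_ncard
    · constructor
      · intro z hz; exact ⟨hz.1, hz.2.trans hlt⟩
      · intro hsub
        have : y1 ∈ {z ∈ s | z < y1} := hsub ⟨h1, hlt⟩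
        exact lt_irrefl _ this.2
    · exact hs.subset (sep_subset _ _)
  intro y1 h1 y2 h2 heq
  rcases lt_trichotomy y1 y2 with hlt | heq' | hlt
  · exact absurd heq (ne_of_lt (key _ h1 _ h2 hlt))
  · exact heq'
  · exact absurd heq.symm (ne_of_lt (key _ h2 _ h1 hlt))

lemma exists_graph [LinearOrder α] (u : Ultrafilter (α × α)) (R : Set (α × α)) (hR : R ∈ u)
    (n m : ℕ)
    (hball : ∀ x : α, ({y | (x, y) ∈ R}).Finite ∧ ({y | (x, y) ∈ R}).ncard < n)
    (hfib : ∀ y : α, ({x | (x, y) ∈ R}).Finite ∧ ({x | (x, y) ∈ R}).ncard < m) :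
    ∃ (D : Set α) (f : α → α), Set.InjOn f D ∧ (∀ x ∈ D, (x, f x) ∈ R) ∧
      {z : α × α | z.1 ∈ D ∧ z.2 = f z.1} ∈ u := by
  classical
  let c1 : α × α → ℕ := fun z => {y ∈ {y | (z.1, y) ∈ R} | y < z.2}.ncard
  let c2 : α × α → ℕ := fun z => {x ∈ {x | (x, z.2) ∈ R} | x < z.1}.ncard
  have hcover : R ⊆ ⋃ v ∈ ((Finset.range n ×ˢ Finset.range m : Finset (ℕ × ℕ)) : Set (ℕ × ℕ)),
      R ∩ {z | c1 z = v.1 ∧ c2 z = v.2} := by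
    intro z hz
    have h1 : c1 z < n :=
      lt_of_le_of_lt (Set.ncard_le_ncard (sep_subset _ _) (hball z.1).1) (hball z.1).2
    have h2 : c2 z < m :=
      lt_of_le_of_lt (Set.ncard_le_ncard (sep_subset _ _) (hfib z.2).1) (hfib z.2).2
    refine Set.mem_biUnion (show ((c1 z, c2 z) : ℕ × ℕ) ∈ _ from ?_) ⟨hz, rfl, rfl⟩
    simp only [Finset.coe_product, Set.mem_prod, Finset.mem_coe, Finset.mem_range]
    exact ⟨h1, h2⟩
  have hmem : (⋃ v ∈ ((Finset.range n ×ˢ Finset.range m : Finset (ℕ × ℕ)) : Set (ℕ × ℕ)),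
      R ∩ {z | c1 z = v.1 ∧ c2 z = v.2}) ∈ u := Filter.mem_of_superset hR hcover
  rw [Ultrafilter.finite_biUnion_mem_iff (Finset.finite_toSet _)] at hmem
  obtain ⟨v, -, hG⟩ := hmem
  set G : Set (α × α) := R ∩ {z | c1 z = v.1 ∧ c2 z = v.2} with hGdef
  have key1 : ∀ x y1 y2, (x, y1) ∈ G → (x, y2) ∈ G → y1 = y2 := by
    intro x y1 y2 hy1 hy2
    refine rank_injOn (hball x).1 (hy1.1 : (x, y1) ∈ R) (hy2.1 : (x, y2) ∈ R) ?_
    show c1 (x, y1) = c1 (x, y2)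
    rw [hy1.2.1, hy2.2.1]
  have key2 : ∀ x1 x2 y, (x1, y) ∈ G → (x2, y) ∈ G → x1 = x2 := by
    intro x1 x2 y hy1 hy2
    refine rank_injOn (hfib y).1 (hy1.1 : (x1, y) ∈ R) (hy2.1 : (x2, y) ∈ R) ?_
    show c2 (x1, y) = c2 (x2, y)
    rw [hy1.2.2, hy2.2.2]
  refine ⟨{x | ∃ y, (x, y) ∈ G}, fun x => if hx : ∃ y, (x, y) ∈ G then hx.choose else x,
    ?_, ?_, ?_⟩
  · intro x1 hx1 x2 hx2 heq
    simp only [Set.mem_setOf_eq] at hx1 hx2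
    simp only [dif_pos hx1, dif_pos hx2] at heq
    exact key2 x1 x2 _ (heq ▸ hx1.choose_spec) hx2.choose_spec
  · intro x hx
    simp only [Set.mem_setOf_eq] at hx
    simp only [dif_pos hx]
    exact hx.choose_spec.1
  · refine Filter.mem_of_superset hG ?_
    rintro ⟨x, y⟩ hz
    have hx : ∃ y', (x, y') ∈ G := ⟨y, hz⟩
    refine ⟨hx, ?_⟩
    simp only [dif_pos hx]
    exact key1 x y _ hz hx.choose_spec

end Helpers

variable {α : Type*}

lemma map_graph (u : Ultrafilter (α × α)) (D : Set α) (f : α → α)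
    (hG : {z : α × α | z.1 ∈ D ∧ z.2 = f z.1} ∈ u) :
    (u.map Prod.fst).map f = u.map Prod.snd := by
  ext S
  simp only [Ultrafilter.mem_map, Set.preimage_preimage]
  constructor
  · intro h'
    refine Filter.mem_of_superset (Filter.inter_mem h' hG) ?_
    rintro ⟨x, y⟩ ⟨h1, h2, h3⟩
    show y ∈ S
    rw [show y = f x from h3]
    exact h1
  · intro h'
    refine Filter.mem_of_superset (Filter.inter_mem h' hG) ?_
    rintro ⟨x, y⟩ ⟨h1, h2, h3⟩
    show f x ∈ S
    rw [← show y = f x from h3]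
    exact h1

lemma ultra_cancel {p r : Ultrafilter α} {f : α → α} {D : Set α} (hD : D ∈ p) (hDr : D ∈ r)
    (hinj : Set.InjOn f D) (hmap : r.map f = p.map f) : r = p := by
  have key : ∀ S ∈ p, S ∈ r := by
    intro S hS
    have h1 : f '' (S ∩ D) ∈ p.map f := by
      rw [Ultrafilter.mem_map]
      exact Filter.mem_of_superset (Filter.inter_mem hS hD)
        (fun x hx => Set.mem_preimage.2 ⟨x, hx, rfl⟩)
    rw [← hmap, Ultrafilter.mem_map] at h1
    refine Filter.mem_of_superset (Filter.inter_mem h1 hDr) ?_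
    rintro x ⟨hx1, hx2⟩
    obtain ⟨s, hs, hfs⟩ := hx1
    have : x = s := hinj hx2 hs.2 hfs.symm
    exact this ▸ hs.1
  exact Ultrafilter.coe_le_coe.1 (Filter.le_def.mpr key)

lemma fix_mem {g : α → α} {p : Ultrafilter α} {D : Set α} (hD : D ∈ p)
    (hinj : Set.InjOn g D) (hmap : p.map g = p) : {x | g x = x} ∈ p := by
  by_contra hfix
  have hS : {x ∈ D | g x ≠ x} ∈ p := by
    have : {x | g x = x}ᶜ ∈ p := Ultrafilter.compl_mem_iff_notMem.2 hfix
    exact Filter.mem_of_superset (Filter.inter_mem hD this) (fun x hx => ⟨hx.1, hx.2⟩)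
  set S : Set α := {x ∈ D | g x ≠ x} with hSdef
  obtain ⟨A, hA⟩ := zorn_subset {A : Set α | A ⊆ S ∧ ∀ a ∈ A, g a ∉ A} (by
    intro c hc hchain
    refine ⟨⋃₀ c, ⟨?_, ?_⟩, fun s hs => Set.subset_sUnion_of_mem hs⟩
    · exact Set.sUnion_subset fun A hA => (hc hA).1
    · rintro a ⟨A1, hA1, ha1⟩ ⟨A2, hA2, hga2⟩
      rcases hchain.total hA1 hA2 with hle | hle
      · exact (hc hA2).2 a (hle ha1) hga2
      · exact (hc hA1).2 a ha1 (hle hga2))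
  have hAS : A ⊆ S := hA.1.1
  have hAE : ∀ a ∈ A, g a ∉ A := hA.1.2
  have hcover : S ⊆ A ∪ (g ⁻¹' A) ∪ (g '' A) := by
    intro x hx
    by_contra hnx
    simp only [Set.mem_union, not_or] at hnx
    obtain ⟨⟨hxA, hxgA⟩, hxim⟩ := hnx
    have hmem : A ∪ {x} ∈ {A : Set α | A ⊆ S ∧ ∀ a ∈ A, g a ∉ A} := by
      constructor
      · exact Set.union_subset hAS (Set.singleton_subset_iff.2 hx)
      · rintro a (ha | ha)
        · rintro (hga | hga)
          · exact hAE a ha hga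
          · exact hxim ⟨a, ha, Set.mem_singleton_iff.1 hga⟩
        · simp only [Set.mem_singleton_iff] at ha
          subst ha
          rintro (hga | hga)
          · exact hxgA hga
          · exact hx.2 (Set.mem_singleton_iff.1 hga)
    have := hA.2 hmem Set.subset_union_left
    exact hxA (this (by simp))
  have hun : A ∪ (g ⁻¹' A) ∪ (g '' A) ∈ p := Filter.mem_of_superset hS hcover
  have hpre : ∀ T ∈ p, g ⁻¹' T ∈ p := by
    intro T hT
    rw [← hmap] at hT
    exact hT
  have hAcase : A ∉ p := by
    intro hAp
    have : A ∩ g ⁻¹' A ∈ p := Filter.inter_mem hAp (hpre A hAp)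
    obtain ⟨x, hx1, hx2⟩ := Ultrafilter.nonempty_of_mem this
    exact hAE x hx1 hx2
  rcases Ultrafilter.union_mem_iff.1 hun with hc1 | hc2
  · rcases Ultrafilter.union_mem_iff.1 hc1 with hc1a | hc1b
    · exact hAcase hc1a
    · exact hAcase (by rw [← hmap]; exact hc1b)
  · -- g '' A ∈ p
    have h1 : g '' A ∩ g ⁻¹' (g '' A) ∩ S ∈ p :=
      Filter.inter_mem (Filter.inter_mem hc2 (hpre _ hc2)) hS
    obtain ⟨x, ⟨⟨a, haA, hax⟩, hgx⟩, hxS⟩ := Ultrafilter.nonempty_of_mem h1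
    obtain ⟨a', ha'A, ha'x⟩ := hgx
    have hxD : x ∈ D := hxS.1
    have ha'D : a' ∈ D := (hAS ha'A).1
    have : a' = x := hinj ha'D hxD ha'x
    subst this
    exact hAE a haA (hax ▸ ha'A)

variable {X : Type*}

lemma CoarseStructure.union_mem' (C : CoarseStructure X) {E1 E2 : Set (X × X)}
    (h1 : E1 ∈ C.sets) (h2 : E2 ∈ C.sets) : E1 ∪ E2 ∈ C.sets := by
  refine C.subset_mem _ (C.comp_mem E1 h1 E2 h2) _ ?_
    (fun x => Or.inl (C.diagonal_mem E1 h1 x))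
  rintro ⟨x, y⟩ (hxy | hxy)
  · exact ⟨y, hxy, C.diagonal_mem E2 h2 y⟩
  · exact ⟨x, C.diagonal_mem E1 h1 x, hxy⟩

lemma finitary_balls (C : CoarseStructure X) (hC : C.Finitary) {R : Set (X × X)}
    (hR : R ∈ C.sets) :
    (∃ n, ∀ x, ({y | (x, y) ∈ R}).Finite ∧ ({y | (x, y) ∈ R}).ncard < n) ∧
    (∃ m, ∀ y, ({x | (x, y) ∈ R}).Finite ∧ ({x | (x, y) ∈ R}).ncard < m) := by
  constructor
  · obtain ⟨n, hn⟩ := hC R hR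
    refine ⟨n, fun x => ?_⟩
    have hb : {y | (x, y) ∈ R} = ball R {x} := by ext y; simp [ball]
    rw [hb]; exact hn x
  · obtain ⟨m, hm⟩ := hC _ (C.inv_mem R hR)
    refine ⟨m, fun y => ?_⟩
    have hb : {x | (x, y) ∈ R} = ball {z : X × X | (z.2, z.1) ∈ R} {y} := by
      ext x; simp [ball]
    rw [hb]; exact hm y

lemma subset_aux [Infinite X] (C C' : CoarseStructure X)
    (hC : C.Finitary) (hC' : C'.Finitary)
    (himp : ∀ p q : Ultrafilter X, IsFree p → IsFree q →
      C.Parallel p q → C'.Parallel p q) :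
    C.sets ⊆ C'.sets := by
  classical
  letI : LinearOrder X := linearOrderOfSTO WellOrderingRel
  intro E hE
  by_contra hEnot
  have hdiagE : ∀ x : X, (x, x) ∈ E := C.diagonal_mem E hE
  have hne : ∀ E' ∈ C'.sets, (E \ E').Nonempty := by
    intro E' hE'
    rw [Set.diff_nonempty]
    intro hsub
    exact hEnot (C'.subset_mem E' hE' E hsub hdiagE)
  haveI : Nonempty C'.sets := by
    obtain ⟨x⟩ := (inferInstance : Nonempty X)
    have hx : ((x, x) : X × X) ∈ ⋃₀ C'.sets := by rw [C'.covers]; trivial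
    obtain ⟨E', hE', -⟩ := hx
    exact ⟨⟨E', hE'⟩⟩
  set F : Filter (X × X) := ⨅ E' : C'.sets, Filter.principal (E \ (E' : Set (X × X))) with hF
  have hdir : Directed (· ≥ ·)
      (fun E' : C'.sets => Filter.principal (E \ (E' : Set (X × X)))) := by
    rintro ⟨E1, h1⟩ ⟨E2, h2⟩
    refine ⟨⟨E1 ∪ E2, C'.union_mem' h1 h2⟩, ?_, ?_⟩ <;>
      exact Filter.principal_mono.2 (Set.diff_subset_diff_right (by simp))
  haveI : F.NeBot := Filter.iInf_neBot_of_directed' hdir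
    (fun E' => Filter.principal_neBot_iff.2 (hne E' E'.2))
  obtain ⟨u, hu⟩ := Ultrafilter.exists_le F
  have humem : ∀ E' ∈ C'.sets, E \ E' ∈ u := fun E' h' =>
    hu (Filter.mem_iInf_of_mem ⟨E', h'⟩ (Filter.mem_principal_self _))
  have hEu : E ∈ u := by
    obtain ⟨E'0⟩ := (inferInstance : Nonempty C'.sets)
    exact Filter.mem_of_superset (humem E'0 E'0.2) Set.diff_subset
  set p : Ultrafilter X := u.map Prod.fst with hp
  set q : Ultrafilter X := u.map Prod.snd with hq
  have hfinimp : ∀ W : Set (X × X), W ∈ u → W.Finite → False := by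
    intro W hW hWfin
    obtain ⟨z, hz, hzpure⟩ := Ultrafilter.eq_pure_of_finite_mem hWfin hW
    have hz2 : z ∈ ⋃₀ C'.sets := by rw [C'.covers]; trivial
    obtain ⟨E', hE', hzE'⟩ := hz2
    have hmem : E \ E' ∈ u := humem E' hE'
    rw [hzpure] at hmem
    exact (Ultrafilter.mem_pure.1 hmem).2 hzE'
  obtain ⟨⟨n1, hn1⟩, ⟨m1, hm1⟩⟩ := finitary_balls C hC hE
  have hKp : ∀ K : Set X, K.Finite → K ∈ p → False := by
    intro K hKfin hKp
    have h1 : Prod.fst ⁻¹' K ∈ u := Ultrafilter.mem_map.1 hKp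
    have hL : ({y | ∃ x ∈ K, (x, y) ∈ E} : Set X).Finite := by
      have heq : {y | ∃ x ∈ K, (x, y) ∈ E} = ⋃ x ∈ K, {y | (x, y) ∈ E} := by
        ext y; simp
      rw [heq]; exact hKfin.biUnion (fun x _ => (hn1 x).1)
    have h2 : Prod.snd ⁻¹' {y | ∃ x ∈ K, (x, y) ∈ E} ∈ u := by
      refine Filter.mem_of_superset (Filter.inter_mem h1 hEu) ?_
      rintro ⟨x, y⟩ ⟨hx, hxy⟩
      exact ⟨x, hx, hxy⟩
    refine hfinimp _ (Filter.inter_mem h1 h2) ((hKfin.prod hL).subset ?_)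
    rintro ⟨x, y⟩ ⟨hx, hy⟩
    exact ⟨hx, hy⟩
  have hKq : ∀ K : Set X, K.Finite → K ∈ q → False := by
    intro K hKfin hKq
    have h1 : Prod.snd ⁻¹' K ∈ u := Ultrafilter.mem_map.1 hKq
    have hL : ({x | ∃ y ∈ K, (x, y) ∈ E} : Set X).Finite := by
      have heq : {x | ∃ y ∈ K, (x, y) ∈ E} = ⋃ y ∈ K, {x | (x, y) ∈ E} := by
        ext x; simp
      rw [heq]; exact hKfin.biUnion (fun y _ => (hm1 y).1)
    have h2 : Prod.fst ⁻¹' {x | ∃ y ∈ K, (x, y) ∈ E} ∈ u := by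
      refine Filter.mem_of_superset (Filter.inter_mem h1 hEu) ?_
      rintro ⟨x, y⟩ ⟨hy, hxy⟩
      exact ⟨y, hy, hxy⟩
    refine hfinimp _ (Filter.inter_mem h2 h1) ((hL.prod hKfin).subset ?_)
    rintro ⟨x, y⟩ ⟨hx, hy⟩
    exact ⟨hx, hy⟩
  have hpfree : IsFree p := Filter.le_def.mpr (fun A hA => by
    by_contra hnA
    exact hKp Aᶜ (Filter.mem_cofinite.1 hA) (Ultrafilter.compl_mem_iff_notMem.2 hnA))
  have hqfree : IsFree q := Filter.le_def.mpr (fun A hA => by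
    by_contra hnA
    exact hKq Aᶜ (Filter.mem_cofinite.1 hA) (Ultrafilter.compl_mem_iff_notMem.2 hnA))
  have hparC : C.Parallel p q := by
    refine ⟨E, hE, fun P hP => ?_⟩
    have h1 : Prod.fst ⁻¹' P ∈ u := Ultrafilter.mem_map.1 hP
    refine Ultrafilter.mem_map.2 (Filter.mem_of_superset (Filter.inter_mem h1 hEu) ?_)
    rintro ⟨x, y⟩ ⟨hx, hxy⟩
    exact ⟨x, hx, hxy⟩
  obtain ⟨E'', hE''mem, hpar⟩ := himp p q hpfree hqfree hparC
  haveI hwne : ((↑p ×ˢ ↑q : Filter (X × X)) ⊓ Filter.principal E'').NeBot := by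
    rw [Filter.inf_principal_neBot_iff]
    intro U hU
    obtain ⟨P, hP, Q, hQ, hPQ⟩ := Filter.mem_prod_iff.1 hU
    have h1 : ball E'' P ∈ q := hpar P hP
    obtain ⟨y, hy1, hy2⟩ := Ultrafilter.nonempty_of_mem (Filter.inter_mem hQ h1)
    obtain ⟨a, haP, haE⟩ := hy2
    exact ⟨(a, y), hPQ ⟨haP, hy1⟩, haE⟩
  obtain ⟨w, hw⟩ := Ultrafilter.exists_le ((↑p ×ˢ ↑q : Filter (X × X)) ⊓ Filter.principal E'')
  have hwE'' : E'' ∈ w := hw (Filter.mem_inf_of_right (Filter.mem_principal_self _))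
  have hwp : w.map Prod.fst = p := by
    have h1 : (↑w : Filter (X × X)) ≤ Filter.comap Prod.fst ↑p :=
      le_trans hw (le_trans inf_le_left (by rw [Filter.prod_eq_inf]; exact inf_le_left))
    exact Ultrafilter.coe_le_coe.1
      (by rw [Ultrafilter.coe_map]; exact Filter.map_le_iff_le_comap.2 h1)
  have hwq : w.map Prod.snd = q := by
    have h1 : (↑w : Filter (X × X)) ≤ Filter.comap Prod.snd ↑q :=
      le_trans hw (le_trans inf_le_left (by rw [Filter.prod_eq_inf]; exact inf_le_right))
    exact Ultrafilter.coe_le_coe.1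
      (by rw [Ultrafilter.coe_map]; exact Filter.map_le_iff_le_comap.2 h1)
  obtain ⟨Df, f, hfinj, hfE, hGf⟩ := exists_graph u E hEu n1 m1 hn1 hm1
  obtain ⟨⟨n2, hn2⟩, ⟨m2, hm2⟩⟩ := finitary_balls C' hC' hE''mem
  obtain ⟨Dh, hfn, hhinj, hhE, hGh⟩ := exists_graph w E'' hwE'' n2 m2 hn2 hm2
  have hqf : p.map f = q := map_graph u Df f hGf
  have hDfp : Df ∈ p :=
    Ultrafilter.mem_map.2 (Filter.mem_of_superset hGf (fun z hz => hz.1))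
  have hqh : p.map hfn = q := by
    have hmg := map_graph w Dh hfn hGh
    rwa [hwp, hwq] at hmg
  have hDhp : Dh ∈ p := by
    rw [← hwp]
    exact Ultrafilter.mem_map.2 (Filter.mem_of_superset hGh (fun z hz => hz.1))
  have hfD : f '' Df ∈ q := by
    rw [← hqf]
    exact Ultrafilter.mem_map.2
      (Filter.mem_of_superset hDfp (fun x hx => ⟨x, hx, rfl⟩))
  have hD2 : Dh ∩ hfn ⁻¹' (f '' Df) ∈ p := by
    refine Filter.inter_mem hDhp ?_
    rw [← hqh] at hfD
    exact Ultrafilter.mem_map.1 hfD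
  set g : X → X := fun x => if hx : hfn x ∈ f '' Df then hx.choose else x with hg
  have hgspec : ∀ x ∈ Dh ∩ hfn ⁻¹' (f '' Df), g x ∈ Df ∧ f (g x) = hfn x := by
    intro x hx
    have hmem : hfn x ∈ f '' Df := hx.2
    simp only [hg, dif_pos hmem]
    exact ⟨hmem.choose_spec.1, hmem.choose_spec.2⟩
  have hginj : Set.InjOn g (Dh ∩ hfn ⁻¹' (f '' Df)) := by
    intro x1 h1 x2 h2 heq
    have e1 := (hgspec x1 h1).2
    have e2 := (hgspec x2 h2).2
    have e3 : hfn x1 = hfn x2 := by rw [← e1, ← e2, heq]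
    exact hhinj h1.1 h2.1 e3
  have hgmap : p.map g = p := by
    have hcong : p.map (f ∘ g) = p.map hfn := by
      apply Ultrafilter.coe_injective
      rw [Ultrafilter.coe_map, Ultrafilter.coe_map]
      refine Filter.map_congr (Filter.eventuallyEq_of_mem hD2 ?_)
      intro x hx
      exact (hgspec x hx).2
    have h1 : (p.map g).map f = p.map f := by
      rw [Ultrafilter.map_map, hcong, hqh, ← hqf]
    have hDfr : Df ∈ p.map g :=
      Ultrafilter.mem_map.2
        (Filter.mem_of_superset hD2 (fun x hx => (hgspec x hx).1))
    exact ultra_cancel hDfp hDfr hfinj h1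
  have hfixmem : {x | g x = x} ∈ p := fix_mem hD2 hginj hgmap
  have hB : {x | (x, f x) ∈ E''} ∈ p := by
    refine Filter.mem_of_superset (Filter.inter_mem hfixmem hD2) ?_
    rintro x ⟨hfix, hx2⟩
    have hsp := hgspec x hx2
    have hfx : f x = hfn x := by
      have hgid : g x = x := hfix
      rw [← hsp.2, hgid]
    show (x, f x) ∈ E''
    rw [hfx]
    exact hhE x hx2.1
  have hfinal : E'' ∈ u := by
    have h1 : Prod.fst ⁻¹' {x | (x, f x) ∈ E''} ∈ u := Ultrafilter.mem_map.1 hB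
    refine Filter.mem_of_superset (Filter.inter_mem h1 hGf) ?_
    rintro ⟨x, y⟩ ⟨hx, hxD, hy⟩
    show (x, y) ∈ E''
    rw [show y = f x from hy]
    exact hx
  obtain ⟨z, hz1, hz2⟩ :=
    Ultrafilter.nonempty_of_mem (Filter.inter_mem hfinal (humem E'' hE''mem))
  exact hz2.2 hz1


end ParallelHelpers

/-- Two finitary coarse structures on the same infinite set with the same
parallelity relation on free ultrafilters coincide. -/
theorem parallel_determines_structure {X : Type*} [Infinite X]
    (C C' : CoarseStructure X) (hC : C.Finitary) (hC' : C'.Finitary)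
    (h : ∀ p q : Ultrafilter X, IsFree p → IsFree q →
      (C.Parallel p q ↔ C'.Parallel p q)) :
    C.sets = C'.sets := by
  refine Set.Subset.antisymm ?_ ?_
  · exact subset_aux C C' hC hC' (fun p q hp hq hpar => (h p q hp hq).1 hpar)
  · exact subset_aux C' C hC' hC (fun p q hp hq hpar => (h p q hp hq).2 hpar)
end

section
/- For a finitary coarse space X_G, the following are equivalent: (1) X_G is λ-tight (any two infinite subsets are linked); (2) for any infinite subsets A, B of X there exist a free ultrafilter p and g ∈ G with A ∈ p and B ∈ gp; (3) for any countable family {A_n : n ∈ ω} of infinite subsets of X there exists a free ultrafilter p such that A_n* ∩ Gp ≠ ∅ for each n. -/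
open Set

open Set

section helpers

lemma exists_free_uf_mem {X : Type*} {S : Set X} (hS : S.Infinite) :
    ∃ p : Ultrafilter X, IsFree p ∧ S ∈ p := by
  haveI : (Filter.cofinite ⊓ Filter.principal S).NeBot :=
    Filter.cofinite_inf_principal_neBot_iff.mpr hS
  exact ⟨Ultrafilter.of (Filter.cofinite ⊓ Filter.principal S),
    (Ultrafilter.of_le _).trans inf_le_left,
    Ultrafilter.of_le _ (Filter.mem_inf_of_right (Filter.mem_principal_self S))⟩

lemma infinite_of_mem_free {X : Type*} {p : Ultrafilter X} (hp : IsFree p)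
    {S : Set X} (hS : S ∈ p) : S.Infinite := by
  by_contra h
  have h2 : Sᶜ ∈ p := hp (by simpa [Filter.mem_cofinite] using Set.not_infinite.mp h)
  exact (Ultrafilter.compl_notMem_iff.mpr hS) h2

lemma free_map' {X : Type*} {p : Ultrafilter X} (hp : IsFree p)
    (g : Equiv.Perm X) : IsFree (Ultrafilter.map ⇑g p) := by
  intro s hs
  rw [Ultrafilter.mem_coe, Ultrafilter.mem_map]
  apply hp
  rw [Filter.mem_cofinite] at hs ⊢
  rw [← Set.preimage_compl]
  exact hs.preimage (g.injective.injOn)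

lemma uf_inter_mem {X : Type*} {p : Ultrafilter X} {S T : Set X}
    (hS : S ∈ p) (hT : T ∈ p) : S ∩ T ∈ p := Filter.inter_mem hS hT

lemma uf_mem_superset {X : Type*} {p : Ultrafilter X} {S T : Set X}
    (hS : S ∈ p) (hST : S ⊆ T) : T ∈ p := Filter.mem_of_superset hS hST

end helpers

/-- TFAE for a finitary coarse space `X_G` on a countably infinite set:
(1) `X_G` is λ-tight; (2) for any infinite `A, B ⊆ X` there are a free ultrafilter `p`
and `g ∈ G` with `A ∈ p` and `B ∈ gp`; (3) for any countable family of infinite sets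
`A n` there is a free ultrafilter `p` with `(A n)* ∩ Gp ≠ ∅` for each `n`. -/
theorem lambdaTight_tfae {X : Type*} [Countable X] [Infinite X]
    (G : Subgroup (Equiv.Perm X)) :
    List.TFAE [
      ∀ A B : Set X, A.Infinite → B.Infinite → LinkedG G A B,
      ∀ A B : Set X, A.Infinite → B.Infinite →
        ∃ p : Ultrafilter X, IsFree p ∧ ∃ g ∈ G, A ∈ p ∧ B ∈ Ultrafilter.map (⇑g) p,
      ∀ A : ℕ → Set X, (∀ n, (A n).Infinite) →
        ∃ p : Ultrafilter X, IsFree p ∧ ∀ n, ∃ q ∈ ufOrbit G p, A n ∈ q ] := by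
  classical
  tfae_have 1 → 2
  · intro h1 A B hA hB
    rcases h1 A B hA hB with ⟨hAf, _⟩ | ⟨A', hA'A, B', hB'B, hA', hB', E, ⟨hdiag, F, h1F, hFG, hEF⟩, hAB, hBA⟩
    · exact absurd hAf hA
    obtain ⟨p, hpfree, hA'p⟩ := exists_free_uf_mem hA'
    have hcover : (⋃ g ∈ (F : Set (Equiv.Perm X)), ⇑g '' B') ∈ p := by
      refine uf_mem_superset hA'p ?_
      intro a ha
      obtain ⟨b, hb, hbE⟩ := hAB ha
      obtain ⟨g, hg, hab⟩ := hEF hbE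
      exact Set.mem_biUnion hg ⟨b, hb, hab.symm⟩
    obtain ⟨g, hg, hgp⟩ := (Ultrafilter.finite_biUnion_mem_iff F.finite_toSet).mp hcover
    refine ⟨p, hpfree, g⁻¹, G.inv_mem (hFG hg), uf_mem_superset hA'p hA'A, ?_⟩
    rw [Ultrafilter.mem_map]
    refine uf_mem_superset hgp ?_
    rintro _ ⟨b, hb, rfl⟩
    simpa using hB'B hb
  tfae_have 2 → 1
  · intro h2 A B hA hB
    obtain ⟨p, hpfree, g, hgG, hAp, hBp⟩ := h2 A B hA hB
    rw [Ultrafilter.mem_map] at hBp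
    set C : Set X := A ∩ ⇑g ⁻¹' B with hC
    have hCp : C ∈ p := uf_inter_mem hAp hBp
    have hCinf : C.Infinite := infinite_of_mem_free hpfree hCp
    refine Or.inr ⟨C, Set.inter_subset_left, ⇑g '' C, ?_, hCinf,
      hCinf.image (g.injective.injOn), ?_⟩
    · rintro _ ⟨c, hc, rfl⟩; exact hc.2
    · refine ⟨entourage (↑({1, g, g⁻¹} : Finset (Equiv.Perm X))),
        ⟨fun x => ⟨1, by simp, by simp⟩, {1, g, g⁻¹}, by simp, ?_, subset_rfl⟩, ?_, ?_⟩
      · intro h hh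
        simp only [Finset.coe_insert, Finset.coe_singleton, Set.mem_insert_iff,
          Set.mem_singleton_iff] at hh
        rcases hh with rfl | rfl | rfl
        · exact G.one_mem
        · exact hgG
        · exact G.inv_mem hgG
      · intro a ha
        exact ⟨g a, ⟨a, ha, rfl⟩, g⁻¹, by simp, by simp⟩
      · rintro _ ⟨c, hc, rfl⟩
        exact ⟨c, hc, g, by simp, rfl⟩
  tfae_have 2 → 3
  · intro h2 A hA
    have step : ∀ (n : ℕ) (C : Set X), ∃ D : Set X, ∃ g : Equiv.Perm X,
        C.Infinite → D ⊆ C ∧ D.Infinite ∧ g ∈ G ∧ ⇑g '' D ⊆ A n := by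
      intro n C
      by_cases hC : C.Infinite
      · obtain ⟨p, hpfree, g, hgG, hCp, hAp⟩ := h2 C (A n) hC (hA n)
        rw [Ultrafilter.mem_map] at hAp
        refine ⟨C ∩ ⇑g ⁻¹' (A n), g, fun _ => ⟨Set.inter_subset_left,
          infinite_of_mem_free hpfree (uf_inter_mem hCp hAp), hgG, ?_⟩⟩
        rintro _ ⟨x, hx, rfl⟩
        exact hx.2
      · exact ⟨∅, 1, fun h => absurd h hC⟩
    choose D g hDg using step
    set P : ℕ → Set X := fun n => Nat.rec (D 0 Set.univ) (fun m ih => D (m + 1) ih) n with hPdef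
    have hPs : ∀ n, P (n + 1) = D (n + 1) (P n) := fun n => rfl
    have hPinf : ∀ n, (P n).Infinite := by
      intro n
      induction n with
      | zero => exact (hDg 0 Set.univ Set.infinite_univ).2.1
      | succ m ih => exact (hDg (m + 1) (P m) ih).2.1
    set gg : ℕ → Equiv.Perm X :=
      fun n => Nat.casesOn n (g 0 Set.univ) (fun m => g (m + 1) (P m)) with hggdef
    have hggG : ∀ n, gg n ∈ G ∧ ⇑(gg n) '' (P n) ⊆ A n := by
      intro n
      cases n with
      | zero => exact ⟨(hDg 0 Set.univ Set.infinite_univ).2.2.1,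
          (hDg 0 Set.univ Set.infinite_univ).2.2.2⟩
      | succ m => exact ⟨(hDg (m + 1) (P m) (hPinf m)).2.2.1,
          (hDg (m + 1) (P m) (hPinf m)).2.2.2⟩
    have hanti : Antitone P := antitone_nat_of_succ_le
      (fun n => (hDg (n + 1) (P n) (hPinf n)).1)
    have hdir : Directed (· ≥ ·) (fun n => (Filter.principal (P n) : Filter X)) := by
      intro m n
      exact ⟨max m n, Filter.principal_mono.mpr (hanti (le_max_left m n)),
        Filter.principal_mono.mpr (hanti (le_max_right m n))⟩
    haveI hne : (Filter.cofinite ⊓ ⨅ n, Filter.principal (P n)).NeBot := by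
      constructor
      intro hbot
      have hmem : (∅ : Set X) ∈ Filter.cofinite ⊓ ⨅ n, Filter.principal (P n) := by
        rw [hbot]; exact Filter.mem_bot
      rw [Filter.mem_inf_iff] at hmem
      obtain ⟨t1, ht1, t2, ht2, hst⟩ := hmem
      rw [Filter.mem_iInf_of_directed hdir] at ht2
      obtain ⟨n, ht2⟩ := ht2
      rw [Filter.mem_principal] at ht2
      rw [Filter.mem_cofinite] at ht1
      obtain ⟨x, hx⟩ := ((hPinf n).diff ht1).nonempty
      have : x ∈ t1 ∩ t2 := ⟨by simpa using hx.2, ht2 hx.1⟩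
      rw [← hst] at this
      exact this
    set p := Ultrafilter.of (Filter.cofinite ⊓ ⨅ n, Filter.principal (P n)) with hp
    have hPp : ∀ n, P n ∈ p := by
      intro n
      exact Ultrafilter.of_le _ (Filter.mem_inf_of_right
        (Filter.mem_iInf_of_mem n (Filter.mem_principal_self (P n))))
    refine ⟨p, (Ultrafilter.of_le _).trans inf_le_left, fun n =>
      ⟨Ultrafilter.map ⇑(gg n) p, ⟨gg n, (hggG n).1, rfl⟩, ?_⟩⟩
    rw [Ultrafilter.mem_map]
    exact uf_mem_superset (hPp n) (fun x hx => (hggG n).2 ⟨x, hx, rfl⟩)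
  tfae_have 3 → 2
  · intro h3 A B hA hB
    obtain ⟨p, hpfree, hq⟩ := h3 (fun n => if n = 0 then A else B) (by
      intro n; by_cases h : n = 0 <;> simp [h, hA, hB])
    obtain ⟨q0, ⟨g0, hg0, rfl⟩, hAq0⟩ := hq 0
    obtain ⟨q1, ⟨g1, hg1, rfl⟩, hBq1⟩ := hq 1
    simp only [if_pos rfl] at hAq0
    simp only [if_neg (by norm_num : (1 : ℕ) ≠ 0)] at hBq1
    refine ⟨Ultrafilter.map ⇑g0 p, free_map' hpfree g0, g1 * g0⁻¹,
      G.mul_mem hg1 (G.inv_mem hg0), hAq0, ?_⟩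
    rw [Ultrafilter.mem_map] at hBq1 ⊢
    rw [Ultrafilter.mem_map]
    have heq : ⇑g0 ⁻¹' (⇑(g1 * g0⁻¹) ⁻¹' B) = ⇑g1 ⁻¹' B := by
      ext x; simp
    rw [heq]
    exact hBq1
  tfae_finish
end
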